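/- Let σ, ᾱ > 0 and λ01, λ10 ≥ 0 with λ01 + λ10 > 0. Define ρ0 = (3ᾱ²(λ10+λ01)/(4σ²))^{1/3}, ā = σ²ρ0²/2, k4 = -σ²/(12ᾱ²), k2 = ā/ᾱ², k1 = (λ10-λ01)/2, and w̄(ρ) = k4ρ⁴ + k2ρ² + k1ρ for ρ ∈ [-ρ0, ρ0], extended linearly with slope -λ01 for ρ ≤ -ρ0 and slope λ10 for ρ ≥ ρ0. Then w̄ is twice continuously differentiable on ℝ. -/

import Mathlib

open Set Filter Topology

lemma glue_left {f g h : ℝ → ℝ} {a b d : ℝ} (hab : a < b)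
    (hg : ∀ x ≤ a, f x = g x) (hh : ∀ x ∈ Set.Icc a b, f x = h x)
    (Hg : HasDerivAt g d a) (Hh : HasDerivAt h d a) : HasDerivAt f d a := by
  have h1 : HasDerivWithinAt f d (Iic a) a :=
    (Hg.hasDerivWithinAt).congr (fun x hx => hg x hx) (hg a le_rfl)
  have hmem : Icc a b ∈ 𝓝[Ici a] a := Icc_mem_nhdsGE_of_mem ⟨le_rfl, hab⟩
  have h2 : HasDerivWithinAt f d (Ici a) a :=
    (Hh.hasDerivWithinAt (s := Ici a)).congr_of_eventuallyEq
      (eventuallyEq_of_mem hmem fun x hx => hh x hx) (hh a ⟨le_rfl, hab.le⟩)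
  have := h1.union h2
  rwa [Iic_union_Ici, hasDerivWithinAt_univ] at this

lemma glue_right {f g h : ℝ → ℝ} {a b d : ℝ} (hab : a < b)
    (hg : ∀ x ∈ Set.Icc a b, f x = g x) (hh : ∀ x, b ≤ x → f x = h x)
    (Hg : HasDerivAt g d b) (Hh : HasDerivAt h d b) : HasDerivAt f d b := by
  have hmem : Icc a b ∈ 𝓝[Iic b] b := Icc_mem_nhdsLE_of_mem ⟨hab, le_rfl⟩
  have h1 : HasDerivWithinAt f d (Iic b) b :=
    (Hg.hasDerivWithinAt (s := Iic b)).congr_of_eventuallyEq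
      (eventuallyEq_of_mem hmem fun x hx => hg x hx) (hg b ⟨hab.le, le_rfl⟩)
  have h2 : HasDerivWithinAt f d (Ici b) b :=
    (Hh.hasDerivWithinAt).congr (fun x hx => hh x hx) (hh b le_rfl)
  have := h1.union h2
  rwa [Iic_union_Ici, hasDerivWithinAt_univ] at this

lemma local_eq_deriv {f g : ℝ → ℝ} {s : Set ℝ} {x d : ℝ} (hs : IsOpen s) (hx : x ∈ s)
    (hfg : ∀ y ∈ s, f y = g y) (Hg : HasDerivAt g d x) : HasDerivAt f d x :=
  Hg.congr_of_eventuallyEq (eventuallyEq_of_mem (hs.mem_nhds hx) hfg)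

/-- The explicitly pasted corrector candidate is twice continuously differentiable. -/
theorem stmt_0 (σ α l01 l10 : ℝ) (hσ : 0 < σ) (hα : 0 < α)
    (h01 : 0 ≤ l01) (h10 : 0 ≤ l10) (hsum : 0 < l01 + l10) :
    let ρ0 : ℝ := (3 * α ^ 2 * (l10 + l01) / (4 * σ ^ 2)) ^ ((1 : ℝ) / 3)
    let abar : ℝ := σ ^ 2 * ρ0 ^ 2 / 2
    let k4 : ℝ := -σ ^ 2 / (12 * α ^ 2)
    let k2 : ℝ := abar / α ^ 2
    let k1 : ℝ := (l10 - l01) / 2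
    let q : ℝ → ℝ := fun ρ => k4 * ρ ^ 4 + k2 * ρ ^ 2 + k1 * ρ
    let w : ℝ → ℝ := fun ρ =>
      if ρ < -ρ0 then q (-ρ0) - l01 * (ρ - (-ρ0))
      else if ρ ≤ ρ0 then q ρ
      else q ρ0 + l10 * (ρ - ρ0)
    ContDiff ℝ 2 w := by
  intro ρ0 abar k4 k2 k1 q w
  have hσ' : σ ^ 2 ≠ 0 := by positivity
  have hα' : α ^ 2 ≠ 0 := by positivity
  have hl : (0:ℝ) < l10 + l01 := by linarith
  have hρ0 : 0 < ρ0 :=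
    Real.rpow_pos_of_pos (div_pos (mul_pos (by positivity) hl) (by positivity)) _
  have hneg : -ρ0 < ρ0 := by linarith
  have hρ0eq : ρ0 = (3 * α ^ 2 * (l10 + l01) / (4 * σ ^ 2)) ^ ((1 : ℝ) / 3) := rfl
  have hcube : ρ0 ^ 3 = 3 * α ^ 2 * (l10 + l01) / (4 * σ ^ 2) := by
    rw [hρ0eq, ← Real.rpow_natCast (_ ^ ((1:ℝ)/3)) 3, ← Real.rpow_mul (by positivity)]
    norm_num
  have hρ3 : 4 * σ ^ 2 * ρ0 ^ 3 = 3 * α ^ 2 * (l10 + l01) := by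
    rw [hcube]; field_simp
  set q1 : ℝ → ℝ := fun x => 4 * k4 * x ^ 3 + 2 * k2 * x + k1 with hq1def
  set q2 : ℝ → ℝ := fun x => 12 * k4 * x ^ 2 + 2 * k2 with hq2def
  have hk4 : k4 = -σ ^ 2 / (12 * α ^ 2) := rfl
  have hk2 : k2 = σ ^ 2 * ρ0 ^ 2 / 2 / α ^ 2 := rfl
  have hk1 : k1 = (l10 - l01) / 2 := rfl
  have hq : q = fun ρ => k4 * ρ ^ 4 + k2 * ρ ^ 2 + k1 * ρ := rfl
  have hw : w = fun ρ =>
      if ρ < -ρ0 then q (-ρ0) - l01 * (ρ - (-ρ0))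
      else if ρ ≤ ρ0 then q ρ
      else q ρ0 + l10 * (ρ - ρ0) := rfl
  have hA : q1 ρ0 = l10 := by
    simp only [hq1def, hk4, hk2, hk1]
    field_simp
    linear_combination 4 * hρ3
  have hB : q1 (-ρ0) = -l01 := by
    simp only [hq1def, hk4, hk2, hk1]
    field_simp
    linear_combination (-4) * hρ3
  have hC : q2 ρ0 = 0 := by
    simp only [hq2def, hk4, hk2]; field_simp; ring
  have hC' : q2 (-ρ0) = 0 := by
    simp only [hq2def, hk4, hk2]; field_simp; ring
  have hqd : ∀ x, HasDerivAt q (q1 x) x := by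
    intro x
    have h0 := (((hasDerivAt_pow 4 x).const_mul k4).add
      ((hasDerivAt_pow 2 x).const_mul k2)).add ((hasDerivAt_id x).const_mul k1)
    rw [hq]
    exact h0.congr_deriv (by simp only [hq1def]; push_cast; ring)
  have hq1d : ∀ x, HasDerivAt q1 (q2 x) x := by
    intro x
    have h0 := (((hasDerivAt_pow 3 x).const_mul (4 * k4)).add
      ((hasDerivAt_id x).const_mul (2 * k2))).add (hasDerivAt_const x k1)
    rw [hq1def]
    exact h0.congr_deriv (by simp only [hq2def]; push_cast; ring)
  set w1 : ℝ → ℝ := fun x => if x < -ρ0 then -l01 else if x ≤ ρ0 then q1 x else l10 with hw1def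
  set w2 : ℝ → ℝ := fun x => if x < -ρ0 then 0 else if x ≤ ρ0 then q2 x else 0 with hw2def
  -- piecewise descriptions of w
  have hgl : ∀ x : ℝ, x ≤ -ρ0 → w x = q (-ρ0) - l01 * (x - (-ρ0)) := by
    intro x hx
    rcases eq_or_lt_of_le hx with h | h
    · simp only [hw, h]
      rw [if_neg (lt_irrefl _), if_pos hneg.le]; ring
    · simp only [hw]; rw [if_pos h]
  have hgm : ∀ x ∈ Set.Icc (-ρ0) ρ0, w x = q x := by
    intro x hx
    simp only [hw]; rw [if_neg (not_lt.2 hx.1), if_pos hx.2]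
  have hgr : ∀ x : ℝ, ρ0 ≤ x → w x = q ρ0 + l10 * (x - ρ0) := by
    intro x hx
    rcases eq_or_lt_of_le hx with h | h
    · simp only [hw, ← h]
      rw [if_neg (not_lt.2 hneg.le), if_pos le_rfl]; ring
    · simp only [hw]
      rw [if_neg (not_lt.2 (by linarith)), if_neg (not_le.2 h)]
  -- piecewise descriptions of w1
  have hg1l : ∀ x : ℝ, x ≤ -ρ0 → w1 x = -l01 := by
    intro x hx
    rcases eq_or_lt_of_le hx with h | h
    · simp only [hw1def, h]
      rw [if_neg (lt_irrefl _), if_pos hneg.le]; exact hB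
    · simp only [hw1def]; rw [if_pos h]
  have hg1m : ∀ x ∈ Set.Icc (-ρ0) ρ0, w1 x = q1 x := by
    intro x hx
    simp only [hw1def]; rw [if_neg (not_lt.2 hx.1), if_pos hx.2]
  have hg1r : ∀ x : ℝ, ρ0 ≤ x → w1 x = l10 := by
    intro x hx
    rcases eq_or_lt_of_le hx with h | h
    · simp only [hw1def, ← h]
      rw [if_neg (not_lt.2 hneg.le), if_pos le_rfl]; exact h ▸ hA
    · simp only [hw1def]
      rw [if_neg (not_lt.2 (by linarith)), if_neg (not_le.2 h)]
  -- first derivative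
  have haff1 : ∀ y : ℝ, HasDerivAt (fun z : ℝ => q (-ρ0) - l01 * (z - (-ρ0))) (-l01) y := by
    intro y
    simpa using (((hasDerivAt_id y).sub_const (-ρ0)).const_mul l01).const_sub (q (-ρ0))
  have haff2 : ∀ y : ℝ, HasDerivAt (fun z : ℝ => q ρ0 + l10 * (z - ρ0)) l10 y := by
    intro y
    simpa using ((((hasDerivAt_id y).sub_const ρ0).const_mul l10).const_add (q ρ0))
  have hwd : ∀ x, HasDerivAt w (w1 x) x := by
    intro x
    rcases lt_trichotomy x (-ρ0) with h | h | h
    · rw [hg1l x h.le]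
      exact local_eq_deriv isOpen_Iio h (fun y hy => hgl y (le_of_lt hy)) (haff1 x)
    · rw [hg1l x h.le, h]
      exact glue_left hneg hgl hgm (haff1 (-ρ0)) (hB ▸ hqd (-ρ0))
    · rcases lt_trichotomy x ρ0 with h2 | h2 | h2
      · rw [hg1m x ⟨h.le, h2.le⟩]
        exact local_eq_deriv isOpen_Ioo (⟨h, h2⟩ : x ∈ Ioo (-ρ0) ρ0)
          (fun y hy => hgm y ⟨hy.1.le, hy.2.le⟩) (hqd x)
      · rw [hg1r x h2.ge, h2]
        exact glue_right hneg hgm hgr (hA ▸ hqd ρ0) (haff2 ρ0)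
      · rw [hg1r x h2.le]
        exact local_eq_deriv isOpen_Ioi h2 (fun y hy => hgr y (le_of_lt hy)) (haff2 x)
  -- second derivative
  have hw2l : ∀ y : ℝ, y ≤ -ρ0 → w2 y = 0 := by
    intro y hy
    rcases eq_or_lt_of_le hy with h | h
    · simp only [hw2def, h]
      rw [if_neg (lt_irrefl _), if_pos hneg.le]; exact hC'
    · simp only [hw2def]; rw [if_pos h]
  have hw2m : ∀ y ∈ Set.Icc (-ρ0) ρ0, w2 y = q2 y := by
    intro y hy
    simp only [hw2def]; rw [if_neg (not_lt.2 hy.1), if_pos hy.2]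
  have hw2r : ∀ y : ℝ, ρ0 ≤ y → w2 y = 0 := by
    intro y hy
    rcases eq_or_lt_of_le hy with h | h
    · simp only [hw2def, ← h]
      rw [if_neg (not_lt.2 hneg.le), if_pos le_rfl]; exact h ▸ hC
    · simp only [hw2def]
      rw [if_neg (not_lt.2 (by linarith)), if_neg (not_le.2 h)]
  have hw1d : ∀ x, HasDerivAt w1 (w2 x) x := by
    intro x
    rcases lt_trichotomy x (-ρ0) with h | h | h
    · rw [hw2l x h.le]
      exact local_eq_deriv isOpen_Iio h (fun y hy => hg1l y (le_of_lt hy))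
        (hasDerivAt_const x (-l01))
    · rw [hw2l x h.le, h]
      exact glue_left hneg hg1l hg1m (hasDerivAt_const (-ρ0) (-l01)) (hC' ▸ hq1d (-ρ0))
    · rcases lt_trichotomy x ρ0 with h2 | h2 | h2
      · rw [hw2m x ⟨h.le, h2.le⟩]
        exact local_eq_deriv isOpen_Ioo (⟨h, h2⟩ : x ∈ Ioo (-ρ0) ρ0)
          (fun y hy => hg1m y ⟨hy.1.le, hy.2.le⟩) (hq1d x)
      · rw [hw2r x h2.ge, h2]
        exact glue_right hneg hg1m hg1r (hC ▸ hq1d ρ0) (hasDerivAt_const ρ0 l10)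
      · rw [hw2r x h2.le]
        exact local_eq_deriv isOpen_Ioi h2 (fun y hy => hg1r y (le_of_lt hy))
          (hasDerivAt_const x l10)
  -- continuity of w2
  have hw2cont : Continuous w2 := by
    have hclamp : Continuous fun x : ℝ => max (-ρ0) (min x ρ0) :=
      continuous_const.max (continuous_id.min continuous_const)
    have hq2c : Continuous q2 := by
      rw [hq2def]
      exact ((continuous_const.mul (continuous_pow 2)).add continuous_const)
    have heq : w2 = fun x => q2 (max (-ρ0) (min x ρ0)) := by
      funext x
      rcases lt_trichotomy x (-ρ0) with h | h | h
      · rw [hw2l x h.le, min_eq_left (by linarith), max_eq_left h.le, hC']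
      · rw [hw2m x ⟨le_of_eq h.symm, by linarith⟩, min_eq_left (by linarith),
          max_eq_right (le_of_eq h.symm)]
      · by_cases h2 : x ≤ ρ0
        · rw [hw2m x ⟨by linarith, h2⟩, min_eq_left h2, max_eq_right (by linarith)]
        · rw [hw2r x (le_of_not_ge h2), min_eq_right (le_of_not_ge h2),
            max_eq_right hneg.le, hC]
    rw [heq]
    exact hq2c.comp hclamp
  -- assemble
  rw [← one_add_one_eq_two]
  refine contDiff_succ_iff_deriv.2 ⟨fun x => (hwd x).differentiableAt,
    fun h => absurd h (by decide), ?_⟩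
  have hdw : deriv w = w1 := funext fun x => (hwd x).deriv
  rw [hdw]
  refine contDiff_one_iff_deriv.2 ⟨fun x => (hw1d x).differentiableAt, ?_⟩
  have hdw1 : deriv w1 = w2 := funext fun x => (hw1d x).deriv
  rw [hdw1]; exact hw2cont
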